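/- If D is an ultrafilter on I such that D-almost every X_i is a regular (T_3) space, then the topological ultraproduct ∏_D X_i is regular. -/

import Mathlib

open Filter Topology Set

universe u v

def USetoid {I : Type u} (D : Ultrafilter I) (X : I → Type v) : Setoid (∀ i, X i) where
  r x y := ∀ᶠ i in (D : Filter I), x i = y i
  iseqv := ⟨fun _ => Filter.Eventually.of_forall fun _ => rfl,
    fun h => h.mono fun _ e => e.symm,
    fun h₁ h₂ => (h₁.and h₂).mono fun _ e => e.1.trans e.2⟩

def Uprod {I : Type u} (D : Ultrafilter I) (X : I → Type v) := Quotient (USetoid D X)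

def ultrabox {I : Type u} (D : Ultrafilter I) (X : I → Type v) (U : ∀ i, Set (X i)) :
    Set (Uprod D X) :=
  {q | ∃ x : ∀ i, X i, Quotient.mk (USetoid D X) x = q ∧ {i | x i ∈ U i} ∈ D}

def uTop {I : Type u} (D : Ultrafilter I) (X : I → Type v) [∀ i, TopologicalSpace (X i)] :
    TopologicalSpace (Uprod D X) :=
  TopologicalSpace.generateFrom
    {s | ∃ U : ∀ i, Set (X i), (∀ i, IsOpen (U i)) ∧ s = ultrabox D X U}

lemma mem_ultrabox {I : Type u} {D : Ultrafilter I} {X : I → Type v} {U : ∀ i, Set (X i)}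
    (x : ∀ i, X i) :
    @Membership.mem (Uprod D X) (Set (Uprod D X)) _ (ultrabox D X U) (Quotient.mk (USetoid D X) x) ↔ {i | x i ∈ U i} ∈ D := by
  constructor
  · rintro ⟨y, hy, hyU⟩
    have hxy : ∀ᶠ i in (D : Filter I), y i = x i := Quotient.exact hy
    filter_upwards [hxy, hyU] with i h1 h2
    rw [← h1]; exact h2
  · exact fun h => ⟨x, rfl, h⟩

lemma compl_ultrabox {I : Type u} {D : Ultrafilter I} {X : I → Type v} (U : ∀ i, Set (X i)) :
    (ultrabox D X U)ᶜ = ultrabox D X (fun i => (U i)ᶜ) := by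
  ext q
  induction q using Quotient.ind with | _ x =>
  erw [mem_compl_iff, mem_ultrabox, mem_ultrabox]
  exact (Ultrafilter.compl_mem_iff_notMem).symm

lemma ultrabox_inter {I : Type u} {D : Ultrafilter I} {X : I → Type v} (U V : ∀ i, Set (X i)) :
    ultrabox D X (fun i => U i ∩ V i) = ultrabox D X U ∩ ultrabox D X V := by
  ext q
  induction q using Quotient.ind with | _ x =>
  erw [mem_inter_iff, mem_ultrabox, mem_ultrabox, mem_ultrabox]
  exact Filter.inter_mem_iff

lemma ultrabox_mono {I : Type u} {D : Ultrafilter I} {X : I → Type v} {U V : ∀ i, Set (X i)}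
    (h : ∀ i, U i ⊆ V i) : ultrabox D X U ⊆ ultrabox D X V := by
  intro q
  induction q using Quotient.ind with | _ x =>
  intro hq
  rw [mem_ultrabox] at hq ⊢
  filter_upwards [hq] with i hi using h i hi

/-- If D-almost every `X i` is a regular (T₃) space, then the topological
ultraproduct `∏_D X i` is regular (T₃). -/
theorem ultraproduct_regular {I : Type u} (D : Ultrafilter I) (X : I → Type u)
    [∀ i, TopologicalSpace (X i)] (h : {i | T3Space (X i)} ∈ D) :
    letI := uTop D X
    T3Space (Uprod D X) := by
  letI := uTop D X
  classical
  have ubox_open : ∀ U : ∀ i, Set (X i), (∀ i, IsOpen (U i)) → IsOpen (ultrabox D X U) :=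
    fun U hU => TopologicalSpace.isOpen_generateFrom_of_mem ⟨U, hU, rfl⟩
  have basis : TopologicalSpace.IsTopologicalBasis
      {s | ∃ U : ∀ i, Set (X i), (∀ i, IsOpen (U i)) ∧ s = ultrabox D X U} := by
    refine ⟨?_, ?_, rfl⟩
    · rintro t₁ ⟨U, hU, rfl⟩ t₂ ⟨V, hV, rfl⟩ q hq
      refine ⟨ultrabox D X (fun i => U i ∩ V i),
        ⟨fun i => U i ∩ V i, fun i => (hU i).inter (hV i), rfl⟩, ?_, ?_⟩
      · rw [ultrabox_inter]; exact hq
      · rw [ultrabox_inter]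
    · apply eq_univ_of_forall
      intro q
      refine mem_sUnion.mpr ⟨ultrabox D X (fun i => univ),
        ⟨fun i => univ, fun _ => isOpen_univ, rfl⟩, ?_⟩
      obtain ⟨x, rfl⟩ := Quotient.exists_rep q
      rw [mem_ultrabox]
      exact univ_mem
  haveI : T0Space (Uprod D X) := by
    refine ⟨fun q q' hsep => ?_⟩
    obtain ⟨x, rfl⟩ := Quotient.exists_rep q
    obtain ⟨y, rfl⟩ := Quotient.exists_rep q'
    by_contra hne
    have hneq : {i | x i = y i} ∉ D := fun hmem => hne (Quotient.sound hmem)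
    have hneq' : {i | x i ≠ y i} ∈ D := (Ultrafilter.compl_mem_iff_notMem).mpr hneq
    set U : ∀ i, Set (X i) := fun i => if T3Space (X i) then {y i}ᶜ else univ with hUdef
    have hUopen : ∀ i, IsOpen (U i) := by
      intro i
      by_cases hi : T3Space (X i)
      · haveI := hi
        simp only [hUdef, if_pos hi]
        exact isOpen_compl_singleton
      · simp only [hUdef, if_neg hi]
        exact isOpen_univ
    have hxU : Quotient.mk (USetoid D X) x ∈ ultrabox D X U := by
      erw [mem_ultrabox]
      filter_upwards [h, hneq'] with i hi1 hi2
      have hT3 : T3Space (X i) := hi1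
      simp only [hUdef]
      rw [if_pos hT3]
      exact hi2
    have hyU : Quotient.mk (USetoid D X) y ∉ ultrabox D X U := by
      erw [mem_ultrabox]
      intro hmem
      have : {i | y i ∈ U i} ∩ {i | T3Space (X i)} ∈ D := inter_mem hmem h
      obtain ⟨i, hi1, hi2⟩ := D.nonempty_of_mem this
      have hT3 : T3Space (X i) := hi2
      simp only [hUdef, mem_setOf_eq] at hi1
      rw [if_pos hT3] at hi1
      exact hi1 rfl
    exact hyU ((hsep.mem_open_iff (ubox_open U hUopen)).mp hxU)
  haveI : RegularSpace (Uprod D X) := by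
    apply RegularSpace.of_exists_mem_nhds_isClosed_subset
    intro q s hs
    obtain ⟨t, ⟨U, hUopen, rfl⟩, hqt, hts⟩ := basis.mem_nhds_iff.mp hs
    obtain ⟨x, rfl⟩ := Quotient.exists_rep q
    have hx : {i | x i ∈ U i} ∈ D := (mem_ultrabox x).mp hqt
    have key : ∀ i, ∃ V : Set (X i), IsOpen V ∧ x i ∈ V ∧
        ((T3Space (X i) ∧ x i ∈ U i) → closure V ⊆ U i) := by
      intro i
      by_cases hi : T3Space (X i) ∧ x i ∈ U i
      · obtain ⟨hT3, hxU⟩ := hi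
        haveI := hT3
        obtain ⟨t, ht, htc, hts'⟩ := exists_mem_nhds_isClosed_subset ((hUopen i).mem_nhds hxU)
        obtain ⟨W, hWt, hWopen, hxW⟩ := mem_nhds_iff.mp ht
        exact ⟨W, hWopen, hxW, fun _ => (closure_minimal hWt htc).trans hts'⟩
      · exact ⟨univ, isOpen_univ, mem_univ _, fun h' => absurd h' hi⟩
    choose V hVopen hxV hVcl using key
    refine ⟨ultrabox D X (fun i => closure (V i)), ?_, ?_, ?_⟩
    · apply mem_nhds_iff.mpr
      refine ⟨ultrabox D X V, ultrabox_mono (fun i => subset_closure), ubox_open V hVopen, ?_⟩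
      rw [mem_ultrabox]
      exact univ_mem' fun i => hxV i
    · rw [← isOpen_compl_iff, compl_ultrabox]
      exact ubox_open _ fun i => isClosed_closure.isOpen_compl
    · refine subset_trans ?_ hts
      intro q' hq'
      obtain ⟨y, rfl⟩ := Quotient.exists_rep q'
      rw [mem_ultrabox] at hq' ⊢
      filter_upwards [hq', h, hx] with i hi1 hi2 hi3
      exact hVcl i ⟨hi2, hi3⟩ hi1
  constructor
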